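/- Let n ≥ 1, ε > 0, r* > 0, and let g: ℝⁿ → [0,∞) be a bounded measurable function that vanishes almost everywhere outside the closed ball of radius r* centered at the origin and is not almost everywhere zero. Define u(x) = (4πε)^{-n/2} ∫_{ℝⁿ} e^{-|x-y|²/(4ε)} g(y) dy. Then u is positive and differentiable on ℝⁿ, and its gradient satisfies |∇u(x)| ≤ ((|x| + r*)/(2ε)) · u(x) for every x ∈ ℝⁿ. -/

import Mathlib

open MeasureTheory Real Set Filter

noncomputable section

abbrev Euc (n : ℕ) := EuclideanSpace ℝ (Fin n)

noncomputable def heatFlow (n : ℕ) (t : ℝ) (φ : Euc n → ℝ) (x : Euc n) : ℝ :=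
  (4 * Real.pi * t) ^ (-(n : ℝ) / 2) * ∫ y, Real.exp (-‖x - y‖ ^ 2 / (4 * t)) * φ y

/-- `f` is `F`-concave on `Ω` (extended-real valued inequality). -/
def FConcaveOn {V : Type*} [AddCommGroup V] [Module ℝ V]
    (Ω : Set V) (F : ℝ → EReal) (f : V → ℝ) : Prop :=
  ∀ x ∈ Ω, ∀ y ∈ Ω, ∀ τ : ℝ, τ ∈ Set.Ioo (0:ℝ) 1 →
    ((1 - τ : ℝ) : EReal) * F (f x) + ((τ : ℝ) : EReal) * F (f y)
      ≤ F (f ((1 - τ) • x + τ • y))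

/-- `F` is admissible on `[0, a)`. -/
def Admissible (a : EReal) (F : ℝ → EReal) : Prop :=
  0 < a ∧ F 0 = ⊥ ∧
  ContinuousOn F {r : ℝ | 0 < r ∧ (r : EReal) < a} ∧
  (∀ r : ℝ, 0 < r → (r : EReal) < a → F r ≠ ⊥ ∧ F r ≠ ⊤) ∧
  StrictMonoOn F {r : ℝ | 0 ≤ r ∧ (r : EReal) < a}

/-- extended-real logarithm with `log 0 = -∞`. -/
noncomputable def elog (r : ℝ) : EReal := if 0 < r then (Real.log r : EReal) else ⊥

noncomputable def Efun (s : ℝ) : ℝ :=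
  (4 * Real.pi) ^ (-(1:ℝ) / 2) * ∫ s' in Set.Ioi (0:ℝ), Real.exp (-(s - s') ^ 2 / 4)

noncomputable def Hfun : ℝ → ℝ := Function.invFun Efun

noncomputable def Ha (a : EReal) (r : ℝ) : EReal :=
  if 0 < r then
    (if a = ⊤ then (Real.log r : EReal) else (Hfun (r / a.toReal) : EReal))
  else ⊥

set_option synthInstance.maxHeartbeats 1000000
set_option maxHeartbeats 1600000

lemma kderiv (n : ℕ) (ε : ℝ) (hε : 0 < ε) (y x : EuclideanSpace ℝ (Fin n)) (a : ℝ) :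
    HasFDerivAt (fun x : EuclideanSpace ℝ (Fin n) => Real.exp (-‖x - y‖ ^ 2 / (4 * ε)) * a)
      (((2*ε)⁻¹ * Real.exp (-‖x - y‖ ^ 2 / (4 * ε)) * a) • innerSL ℝ (y - x)) x := by
  have h1 : HasFDerivAt (fun x : EuclideanSpace ℝ (Fin n) => ‖x - y‖ ^ 2)
      (2 • (innerSL ℝ (x - y)).comp (ContinuousLinearMap.id ℝ _)) x :=
    ((hasFDerivAt_id x).sub_const y).norm_sq
  have h2 := ((h1.const_mul (-(4*ε)⁻¹)).exp).mul_const a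
  have harg : ∀ z : EuclideanSpace ℝ (Fin n),
      -‖z - y‖ ^ 2 / (4 * ε) = -(4*ε)⁻¹ * ‖z - y‖ ^ 2 := by intro z; ring
  simp only [harg]
  refine h2.congr_fderiv ?_
  ext v
  simp only [ContinuousLinearMap.smul_apply, ContinuousLinearMap.comp_apply,
    ContinuousLinearMap.id_apply, innerSL_apply_apply, inner_sub_left, smul_eq_mul]
  field_simp
  ring

/-- gradient estimate `|∇u| ≤ ((|x|+r*)/(2ε)) u` for the heat evolution `u = e^{εΔ}g`
of a bounded nonnegative `g` supported in the closed ball of radius `r*`. -/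
theorem stmt12 (n : ℕ) (hn : 1 ≤ n) (ε rstar : ℝ) (hε : 0 < ε) (hr : 0 < rstar)
    (g : Euc n → ℝ) (hgm : Measurable g) (hg0 : ∀ x, 0 ≤ g x) (hgb : ∃ C : ℝ, ∀ x, g x ≤ C)
    (hsupp : ∀ᵐ x ∂(volume : Measure (Euc n)),
      x ∉ Metric.closedBall (0 : Euc n) rstar → g x = 0)
    (hne : ¬ g =ᵐ[(volume : Measure (Euc n))] 0) :
    (∀ x, 0 < heatFlow n ε g x) ∧
    Differentiable ℝ (heatFlow n ε g) ∧
    ∀ x, ‖fderiv ℝ (heatFlow n ε g) x‖ ≤ ((‖x‖ + rstar) / (2 * ε)) * heatFlow n ε g x := by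
  obtain ⟨C, hC⟩ := hgb
  have hC0 : (0:ℝ) ≤ C := le_trans (hg0 0) (hC 0)
  set B : Set (Euc n) := Metric.closedBall (0 : Euc n) rstar with hB
  set K : Euc n → Euc n → ℝ := fun x y => Real.exp (-‖x - y‖ ^ 2 / (4 * ε)) with hKdef
  have hKpos : ∀ x y, 0 < K x y := fun x y => Real.exp_pos _
  have hKle : ∀ x y, K x y ≤ 1 := by
    intro x y
    rw [hKdef, ← Real.exp_zero]
    apply Real.exp_le_exp.mpr
    have h1 : (0:ℝ) ≤ ‖x - y‖ ^ 2 / (4 * ε) := by positivity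
    rw [neg_div]
    linarith
  -- continuity/measurability of the kernel
  have hKc : ∀ x : Euc n, Continuous (fun y => K x y) := by
    intro x
    exact Real.continuous_exp.comp
      ((((continuous_const.sub continuous_id).norm.pow 2).neg).div_const _)
  have hKgm : ∀ x : Euc n, AEStronglyMeasurable (fun y => K x y * g y)
      (volume : Measure (Euc n)) :=
    fun x => ((hKc x).measurable.mul hgm).aestronglyMeasurable
  -- integrable dominating indicator
  have hind : Integrable (B.indicator fun _ => C) (volume : Measure (Euc n)) :=
    (integrableOn_const measure_closedBall_lt_top.ne).integrable_indicator
      measurableSet_closedBall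
  have hgB : ∀ᵐ y ∂(volume : Measure (Euc n)), ∀ x : Euc n,
      ‖K x y * g y‖ ≤ B.indicator (fun _ => C) y := by
    filter_upwards [hsupp] with y hy x
    by_cases hyB : y ∈ B
    · rw [Set.indicator_of_mem hyB, Real.norm_eq_abs,
        abs_of_nonneg (mul_nonneg (hKpos x y).le (hg0 y))]
      calc K x y * g y ≤ 1 * C := mul_le_mul (hKle x y) (hC y) (hg0 y) zero_le_one
        _ = C := one_mul C
    · rw [Set.indicator_of_notMem hyB, hy hyB, mul_zero, norm_zero]
  have hInt : ∀ x : Euc n, Integrable (fun y => K x y * g y) (volume : Measure (Euc n)) := by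
    intro x
    refine hind.mono' (hKgm x) ?_
    filter_upwards [hgB] with y hy using hy x
  -- positivity of the integral
  have hIpos : ∀ x : Euc n, 0 < ∫ y, K x y * g y := by
    intro x
    rw [integral_pos_iff_support_of_nonneg (fun y => mul_nonneg (hKpos x y).le (hg0 y)) (hInt x)]
    have hsupp_eq : (Function.support fun y => K x y * g y) = Function.support g := by
      ext y; simp [Function.mem_support, (hKpos x y).ne']
    rw [hsupp_eq, pos_iff_ne_zero]
    intro h0
    apply hne
    have h1 : ∀ᵐ y ∂(volume : Measure (Euc n)), g y = 0 := by
      rw [ae_iff]; simpa [Function.support] using h0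
    filter_upwards [h1] with y hy using hy
  have hc : (0:ℝ) < (4 * Real.pi * ε) ^ (-(n : ℝ) / 2) := by
    apply Real.rpow_pos_of_pos
    positivity
  have hu : ∀ x, heatFlow n ε g x = (4 * Real.pi * ε) ^ (-(n : ℝ) / 2) * ∫ y, K x y * g y :=
    fun _ => rfl
  -- the derivative kernel
  set K' : Euc n → Euc n → (Euc n →L[ℝ] ℝ) :=
    fun x y => ((2*ε)⁻¹ * K x y * g y) • innerSL ℝ (y - x) with hK'def
  have hK' : ∀ (x y : Euc n), HasFDerivAt (fun x => K x y * g y) (K' x y) x :=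
    fun x y => kderiv n ε hε y x (g y)
  have hnorm : ∀ x y : Euc n, ‖K' x y‖ = (2*ε)⁻¹ * K x y * g y * ‖y - x‖ := by
    intro x y
    show ‖((2*ε)⁻¹ * K x y * g y) • innerSL ℝ (y - x)‖ = _
    rw [norm_smul (β := Euc n →L[ℝ] ℝ), innerSL_apply_norm, Real.norm_eq_abs,
      abs_of_nonneg (mul_nonneg (mul_nonneg (by positivity) (hKpos x y).le) (hg0 y))]
  have hK'm : ∀ x : Euc n, AEStronglyMeasurable (fun y => K' x y)
      (volume : Measure (Euc n)) := by
    intro x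
    show AEStronglyMeasurable ((fun y => (2*ε)⁻¹ * K x y * g y) • fun y => innerSL ℝ (y - x)) _
    apply AEStronglyMeasurable.smul
    · exact ((measurable_const.mul (hKc x).measurable).mul hgm).aestronglyMeasurable
    · exact ((innerSL ℝ).continuous.comp (continuous_id.sub continuous_const)).aestronglyMeasurable
  -- differentiability of the integral
  have hDer : ∀ x₀ : Euc n,
      HasFDerivAt (fun x => ∫ y, K x y * g y) (∫ y, K' x₀ y) x₀ := by
    intro x₀
    have bound_int : Integrable
        (fun y => ((‖x₀‖ + 1 + rstar) / (2*ε)) * B.indicator (fun _ => C) y)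
        (volume : Measure (Euc n)) := hind.const_mul _
    refine hasFDerivAt_integral_of_dominated_of_fderiv_le (Metric.ball_mem_nhds x₀ zero_lt_one)
      (Filter.Eventually.of_forall fun x => hKgm x) (hInt x₀) (hK'm x₀) ?_ bound_int ?_
    · filter_upwards [hsupp] with y hy x hx
      rw [hnorm x y]
      by_cases hyB : y ∈ B
      · rw [Set.indicator_of_mem hyB]
        have hyr : ‖y‖ ≤ rstar := mem_closedBall_zero_iff.mp hyB
        have hxn : ‖x‖ ≤ ‖x₀‖ + 1 := by
          have h2 : ‖x - x₀‖ < 1 := mem_ball_iff_norm.mp hx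
          calc ‖x‖ = ‖x - x₀ + x₀‖ := by rw [sub_add_cancel]
            _ ≤ ‖x - x₀‖ + ‖x₀‖ := norm_add_le _ _
            _ ≤ ‖x₀‖ + 1 := by linarith
        have h1 : ‖y - x‖ ≤ ‖x₀‖ + 1 + rstar := by
          calc ‖y - x‖ ≤ ‖y‖ + ‖x‖ := norm_sub_le _ _
            _ ≤ ‖x₀‖ + 1 + rstar := by linarith
        have e1 : (2*ε)⁻¹ * K x y * g y ≤ (2*ε)⁻¹ * C := by
          have h2 : K x y * g y ≤ 1 * C := mul_le_mul (hKle x y) (hC y) (hg0 y) zero_le_one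
          calc (2*ε)⁻¹ * K x y * g y = (2*ε)⁻¹ * (K x y * g y) := by ring
            _ ≤ (2*ε)⁻¹ * (1 * C) := by
                apply mul_le_mul_of_nonneg_left h2 (by positivity)
            _ = (2*ε)⁻¹ * C := by ring
        calc (2*ε)⁻¹ * K x y * g y * ‖y - x‖
            ≤ (2*ε)⁻¹ * C * (‖x₀‖ + 1 + rstar) :=
              mul_le_mul e1 h1 (norm_nonneg _) (by positivity)
          _ = (‖x₀‖ + 1 + rstar) / (2*ε) * C := by ring
      · rw [Set.indicator_of_notMem hyB, hy hyB]
        simp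
    · exact Filter.Eventually.of_forall fun y x _ => hK' x y
  have hD : ∀ x₀ : Euc n, HasFDerivAt (heatFlow n ε g)
      (((4 * Real.pi * ε) ^ (-(n : ℝ) / 2)) • ∫ y, K' x₀ y) x₀ :=
    fun x₀ => (hDer x₀).const_mul _
  refine ⟨fun x => ?_, fun x => (hD x).differentiableAt, fun x => ?_⟩
  · rw [hu x]
    exact mul_pos hc (hIpos x)
  · rw [(hD x).fderiv, norm_smul, Real.norm_eq_abs, abs_of_pos hc]
    have hb : ‖∫ y, K' x y‖ ≤ ∫ y, ((‖x‖ + rstar) / (2*ε)) * (K x y * g y) := by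
      apply norm_integral_le_of_norm_le ((hInt x).const_mul _)
      filter_upwards [hsupp] with y hy
      rw [hnorm x y]
      by_cases h0 : g y = 0
      · rw [h0]; simp
      · have hyB : y ∈ B := by by_contra h; exact h0 (hy h)
        have hyr : ‖y‖ ≤ rstar := mem_closedBall_zero_iff.mp hyB
        have h1 : ‖y - x‖ ≤ ‖x‖ + rstar := by
          calc ‖y - x‖ ≤ ‖y‖ + ‖x‖ := norm_sub_le _ _
            _ ≤ ‖x‖ + rstar := by linarith
        calc (2*ε)⁻¹ * K x y * g y * ‖y - x‖
            ≤ (2*ε)⁻¹ * K x y * g y * (‖x‖ + rstar) := by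
              apply mul_le_mul_of_nonneg_left h1
              exact mul_nonneg (mul_nonneg (by positivity) (hKpos x y).le) (hg0 y)
          _ = (‖x‖ + rstar) / (2*ε) * (K x y * g y) := by ring
    rw [integral_const_mul] at hb
    calc (4 * Real.pi * ε) ^ (-(n : ℝ) / 2) * ‖∫ y, K' x y‖
        ≤ (4 * Real.pi * ε) ^ (-(n : ℝ) / 2) *
            ((‖x‖ + rstar) / (2*ε) * ∫ y, K x y * g y) :=
          mul_le_mul_of_nonneg_left hb hc.le
      _ = (‖x‖ + rstar) / (2*ε) *
            ((4 * Real.pi * ε) ^ (-(n : ℝ) / 2) * ∫ y, K x y * g y) := by ring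
      _ = (‖x‖ + rstar) / (2*ε) * heatFlow n ε g x := by rw [hu x]
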